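/- arXiv:2604.18568 — 2 statements merged into one kernel-verified Lean document; each statement's English description precedes it below -/
import Mathlib

section
/- Let p be a prime, K a field with CharP K p, n : ℕ, and μ ν : Matrix (Fin n) (Fin n) K with IsUnit (det μ) and IsUnit (det ν). Then ξ(μ * ν) = ξ(μ) * ξ(ν), where ξ is defined as in the context (i.e., ξ, viewed as a function on invertible matrices, is multiplicative). -/
open Finset

/-- The operator `ξ` from the paper: the sum over all matrices of natural numbers
`a : Fin n → Fin n → ℕ` whose every row sum and every column sum equals `p - 1`
(all such `a` have entries `< p`, so the index set below captures exactly these) of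
`(∏ k, multinomial (a · k)) * ∏ k, ∏ l, (μ l k) ^ (a l k)`. -/
noncomputable def xi (p n : ℕ) {R : Type*} [CommRing R] (μ : Matrix (Fin n) (Fin n) R) : R :=
  ∑ a ∈ Finset.filter
      (fun a : Fin n → Fin n → ℕ =>
        (∀ k, ∑ l, a k l = p - 1) ∧ (∀ l, ∑ k, a k l = p - 1))
      (Fintype.piFinset fun _ => Fintype.piFinset fun _ => Finset.range p),
    ((∏ k, Nat.multinomial Finset.univ (fun l => a l k) : ℕ) : R) *
      ∏ k, ∏ l, (μ l k) ^ (a l k)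

/-- `xi` commutes with ring homomorphisms. -/
lemma map_xi {R S : Type*} [CommRing R] [CommRing S] (f : R →+* S) (p n : ℕ)
    (μ : Matrix (Fin n) (Fin n) R) :
    f (xi p n μ) = xi p n (μ.map f) := by
  simp only [xi, map_sum, map_mul, map_natCast, map_prod, map_pow, Matrix.map_apply]

/-- Reindexation of `xi` by the transposed exponent matrix. -/
lemma xi_eq_sum_B (p n : ℕ) (hp0 : 0 < p) {R : Type*} [CommRing R] (μ : Matrix (Fin n) (Fin n) R) :
    xi p n μ = ∑ b ∈ (Fintype.piFinset fun _ : Fin n =>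
        piAntidiag (univ : Finset (Fin n)) (p - 1)).filter
        (fun b => ∀ l, ∑ k, b k l = p - 1),
      ((∏ k, Nat.multinomial Finset.univ (b k) : ℕ) : R) * ∏ k, ∏ l, (μ l k) ^ (b k l) := by
  rw [xi]
  refine Finset.sum_nbij' (fun a => fun k l => a l k) (fun b => fun l k => b k l) ?_ ?_ ?_ ?_ ?_
  · intro a ha
    simp only [mem_filter, Fintype.mem_piFinset, mem_piAntidiag, mem_range] at ha ⊢
    obtain ⟨-, hrow, hcol⟩ := ha
    exact ⟨fun k => ⟨hcol k, fun l _ => mem_univ l⟩, hrow⟩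
  · intro b hb
    simp only [mem_filter, Fintype.mem_piFinset, mem_piAntidiag, mem_range] at hb ⊢
    obtain ⟨hpi, hrow⟩ := hb
    refine ⟨fun l => fun k => ?_, fun k => hrow k, fun l => (hpi l).1⟩
    have : b k l ≤ p - 1 := (hpi k).1 ▸ Finset.single_le_sum (fun i _ => Nat.zero_le _) (mem_univ l)
    omega
  · intro a _; rfl
  · intro b _; rfl
  · intro a _; rfl

/-- The generating-function identity: summing the expanded product over all points
recovers `xi` up to a sign. -/
lemma sum_prod_pow_eq_xi (p n : ℕ) [Fact p.Prime]
    (μ : Matrix (Fin n) (Fin n) (ZMod p)) :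
    ∑ x : Fin n → ZMod p, ∏ k, (∑ l, μ l k * x l) ^ (p - 1)
    = (-1 : ZMod p) ^ n * xi p n μ := by
  have hp := (Fact.out : p.Prime)
  rw [xi_eq_sum_B p n hp.pos]
  have h1 : ∀ x : Fin n → ZMod p, ∏ k, (∑ l, μ l k * x l) ^ (p - 1)
      = ∑ b ∈ Fintype.piFinset (fun _ : Fin n => piAntidiag (univ : Finset (Fin n)) (p-1)),
          ∏ k, ((Nat.multinomial univ (b k) : ZMod p) * ∏ l, (μ l k * x l) ^ (b k l)) := by
    intro x
    simp_rw [Finset.sum_pow_eq_sum_piAntidiag]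
    rw [Finset.prod_univ_sum]
  simp_rw [h1]
  rw [Finset.sum_comm]
  have h2 : ∀ b : Fin n → Fin n → ℕ, ∑ x : Fin n → ZMod p,
      ∏ k, ((Nat.multinomial univ (b k) : ZMod p) * ∏ l, (μ l k * x l) ^ (b k l))
      = ((∏ k, Nat.multinomial univ (b k) : ℕ) : ZMod p) * (∏ k, ∏ l, μ l k ^ b k l)
        * ∏ l, ∑ t : ZMod p, t ^ (∑ k, b k l) := by
    intro b
    have key : ∀ x : Fin n → ZMod p,
        ∏ k, ((Nat.multinomial univ (b k) : ZMod p) * ∏ l, (μ l k * x l) ^ (b k l))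
        = ((∏ k, Nat.multinomial univ (b k) : ℕ) : ZMod p) * (∏ k, ∏ l, μ l k ^ b k l)
          * ∏ l, x l ^ (∑ k, b k l) := by
      intro x
      simp_rw [mul_pow, Finset.prod_mul_distrib, Nat.cast_prod]
      have hx : ∏ k : Fin n, ∏ l : Fin n, x l ^ b k l = ∏ l, x l ^ ∑ k, b k l := by
        rw [Finset.prod_comm]
        simp_rw [Finset.prod_pow_eq_pow_sum]
      rw [hx]
      ring
    simp_rw [key]
    rw [← Finset.mul_sum]
    congr 1
    rw [Finset.prod_univ_sum, Fintype.piFinset_univ]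
  simp_rw [h2]
  rw [← Finset.sum_filter_add_sum_filter_not _ (fun b => ∀ l, ∑ k, b k l = p - 1)]
  have hzero : ∑ b ∈ (Fintype.piFinset fun _ : Fin n =>
        piAntidiag (univ : Finset (Fin n)) (p - 1)).filter
        (fun b => ¬ ∀ l, ∑ k, b k l = p - 1),
      ((∏ k, Nat.multinomial univ (b k) : ℕ) : ZMod p) * (∏ k, ∏ l, μ l k ^ b k l)
        * ∏ l, ∑ t : ZMod p, t ^ (∑ k, b k l) = 0 := by
    refine Finset.sum_eq_zero fun b hb => ?_
    simp only [mem_filter, Fintype.mem_piFinset, mem_piAntidiag] at hb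
    obtain ⟨hpi, hne⟩ := hb
    have hlt : ∃ l, ∑ k, b k l < p - 1 := by
      by_contra hc
      push_neg at hc
      apply hne
      have hsum : ∑ l, ∑ k, b k l = ∑ l : Fin n, (p - 1) := by
        rw [Finset.sum_comm]
        exact Finset.sum_congr rfl fun k _ => (hpi k).1
      exact fun l => ((Finset.sum_eq_sum_iff_of_le (fun i _ => hc i)).mp hsum.symm l
        (mem_univ l)).symm
    obtain ⟨l0, hl0⟩ := hlt
    have : ∑ t : ZMod p, t ^ (∑ k, b k l0) = 0 := by
      have := FiniteField.sum_pow_lt_card_sub_one (K := ZMod p) (∑ k, b k l0)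
        (by rwa [ZMod.card])
      exact this
    exact mul_eq_zero_of_right _ (Finset.prod_eq_zero (mem_univ l0) this)
  rw [hzero, add_zero, Finset.mul_sum]
  refine Finset.sum_congr rfl fun b hb => ?_
  simp only [mem_filter] at hb
  have : ∏ l : Fin n, ∑ t : ZMod p, t ^ (∑ k, b k l) = (-1) ^ n := by
    calc ∏ l : Fin n, ∑ t : ZMod p, t ^ (∑ k, b k l)
        = ∏ l : Fin n, (-1 : ZMod p) := by
          refine Finset.prod_congr rfl fun l _ => ?_
          rw [hb.2 l]
          simp_rw [ZMod.pow_card_sub_one]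
          rw [Finset.sum_boole, Finset.filter_ne', Finset.card_erase_of_mem (mem_univ 0),
            Finset.card_univ, ZMod.card]
          push_cast [Nat.cast_sub hp.one_le]
          simp
      _ = (-1) ^ n := by simp
  rw [this]
  ring

/-- The counting identity: the same sum equals a signed power of the determinant. -/
lemma sum_prod_pow_eq_det (p n : ℕ) [Fact p.Prime] (μ : Matrix (Fin n) (Fin n) (ZMod p)) :
    ∑ x : Fin n → ZMod p, ∏ k, (∑ l, μ l k * x l) ^ (p - 1)
      = (-1 : ZMod p) ^ n * μ.det ^ (p - 1) := by
  classical
  have hp := (Fact.out : p.Prime)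
  have hvm : ∀ (x : Fin n → ZMod p) (k : Fin n), ∑ l, μ l k * x l = Matrix.vecMul x μ k := by
    intro x k
    simp [Matrix.vecMul, dotProduct, mul_comm]
  simp_rw [hvm]
  by_cases hdet : μ.det = 0
  · rw [hdet, zero_pow (Nat.sub_ne_zero_of_lt hp.one_lt), mul_zero]
    have hterm : ∀ x : Fin n → ZMod p, ∏ k, (Matrix.vecMul x μ k) ^ (p - 1)
        = if ∀ i, Matrix.vecMul x μ i ≠ 0 then (1 : ZMod p) else 0 := by
      intro x
      by_cases hy : ∀ i, Matrix.vecMul x μ i ≠ 0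
      · rw [if_pos hy]
        exact Finset.prod_eq_one fun k _ => by
          rw [ZMod.pow_card_sub_one, if_pos (hy k)]
      · rw [if_neg hy]
        push_neg at hy
        obtain ⟨i, hi⟩ := hy
        exact Finset.prod_eq_zero (mem_univ i)
          (by rw [ZMod.pow_card_sub_one, if_neg (not_not_intro hi)])
    rw [Finset.sum_congr rfl fun x _ => hterm x]
    rw [Finset.sum_boole (p := fun x : Fin n → ZMod p => ∀ i, Matrix.vecMul x μ i ≠ 0) (s := univ)]
    rw [ZMod.natCast_eq_zero_iff]
    set P : (Fin n → ZMod p) → Prop := fun x => ∀ i, Matrix.vecMul x μ i ≠ 0 with hP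
    have hcard := Finset.card_eq_sum_card_fiberwise
      (f := fun x : Fin n → ZMod p => Matrix.vecMul x μ) (s := univ.filter P) (t := univ)
      (fun x _ => mem_univ _)
    rw [hcard]
    refine Finset.dvd_sum fun y _ => ?_
    rcases Finset.eq_empty_or_nonempty
      ((univ.filter P).filter fun x => Matrix.vecMul x μ = y) with he | ⟨x0, hx0⟩
    · simp [he]
    · simp only [mem_filter, mem_univ, true_and] at hx0
      obtain ⟨hPx0, hfx0⟩ := hx0
      have hbij : ((univ.filter P).filter fun x => Matrix.vecMul x μ = y).card
          = (univ.filter fun z : Fin n → ZMod p => Matrix.vecMul z μ = 0).card := by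
        refine (Finset.card_bij (fun z _ => x0 + z) ?_ ?_ ?_).symm
        · intro z hz
          simp only [mem_filter, mem_univ, true_and] at hz ⊢
          have : Matrix.vecMul (x0 + z) μ = Matrix.vecMul x0 μ := by
            rw [Matrix.add_vecMul, hz, add_zero]
          constructor
          · intro k; rw [this]; exact hPx0 k
          · rw [this, hfx0]
        · intro z1 h1 z2 h2 h
          exact add_left_cancel h
        · intro w hw
          simp only [mem_filter, mem_univ, true_and] at hw
          refine ⟨w - x0, ?_, by ring⟩
          simp only [mem_filter, mem_univ, true_and]
          rw [Matrix.sub_vecMul, hw.2, hfx0, sub_self]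
      rw [hbij]
      have hker : (univ.filter fun z : Fin n → ZMod p => Matrix.vecMul z μ = 0).card
          = Fintype.card (LinearMap.ker μ.vecMulLinear) := by
        rw [← Fintype.card_subtype]
        exact Fintype.card_congr (Equiv.subtypeEquivRight
          (p := fun z : Fin n → ZMod p => Matrix.vecMul z μ = 0)
          (q := fun z : Fin n → ZMod p => z ∈ LinearMap.ker μ.vecMulLinear)
          (fun z => by simp [LinearMap.mem_ker])).symm
      rw [hker, Module.card_eq_pow_finrank (K := ZMod p), ZMod.card]
      refine dvd_pow_self p ?_
      obtain ⟨v, hv, hv0⟩ := Matrix.exists_vecMul_eq_zero_iff.mpr hdet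
      have : Nontrivial (LinearMap.ker μ.vecMulLinear) := by
        refine nontrivial_of_ne ⟨v, by simp [LinearMap.mem_ker, hv0]⟩ 0 ?_
        simp [Subtype.ext_iff, hv]
      have := Module.finrank_pos_iff (R := ZMod p) (M := LinearMap.ker μ.vecMulLinear) |>.mpr this
      omega
  · have hdetu : IsUnit μ.det := isUnit_iff_ne_zero.mpr hdet
    have hbij : Function.Bijective (fun x : Fin n → ZMod p => Matrix.vecMul x μ) := by
      constructor
      · intro x y h
        have := congrArg (fun z => Matrix.vecMul z (μ⁻¹)) h
        simpa [Matrix.vecMul_vecMul, Matrix.mul_nonsing_inv μ hdetu,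
          Matrix.vecMul_one] using this
      · intro y
        exact ⟨Matrix.vecMul y μ⁻¹, by
          simp [Matrix.vecMul_vecMul, Matrix.nonsing_inv_mul μ hdetu, Matrix.vecMul_one]⟩
    rw [Fintype.sum_bijective _ hbij _ (fun y => ∏ k, (y k) ^ (p - 1)) (fun x => rfl)]
    have h1 : ∀ y : Fin n → ZMod p, ∏ k, (y k) ^ (p - 1)
        = if ∀ i, y i ≠ 0 then (1 : ZMod p) else 0 := by
      intro y
      by_cases hy : ∀ i, y i ≠ 0
      · rw [if_pos hy]
        exact Finset.prod_eq_one fun k _ => by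
          rw [ZMod.pow_card_sub_one, if_pos (hy k)]
      · rw [if_neg hy]
        push_neg at hy
        obtain ⟨i, hi⟩ := hy
        exact Finset.prod_eq_zero (mem_univ i)
          (by rw [ZMod.pow_card_sub_one, if_neg (not_not_intro hi)])
    rw [Finset.sum_congr rfl fun y _ => h1 y]
    rw [Finset.sum_boole (p := fun y : Fin n → ZMod p => ∀ i, y i ≠ 0) (s := univ)]
    have hcount : ((univ : Finset (Fin n → ZMod p)).filter fun y => ∀ i, y i ≠ 0).card
        = (p - 1) ^ n := by
      have hset : ((univ : Finset (Fin n → ZMod p)).filter fun y => ∀ i, y i ≠ 0)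
          = Fintype.piFinset (fun _ : Fin n => univ.filter (· ≠ 0)) := by
        ext y; simp [Fintype.mem_piFinset]
      rw [hset, Fintype.card_piFinset]
      simp [Finset.filter_ne', Finset.card_erase_of_mem, ZMod.card]
    rw [hcount]
    have hd1 : μ.det ^ (p - 1) = 1 := ZMod.pow_card_sub_one_eq_one hdet
    rw [hd1, mul_one]
    push_cast [Nat.cast_sub hp.one_le]
    simp

/-- Over `ZMod p`, `xi` is the `(p-1)`-st power of the determinant. -/
lemma xi_zmod (p n : ℕ) [Fact p.Prime] (μ : Matrix (Fin n) (Fin n) (ZMod p)) :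
    xi p n μ = μ.det ^ (p - 1) := by
  have hne : ((-1 : ZMod p) ^ n) ≠ 0 := pow_ne_zero _ (neg_ne_zero.mpr one_ne_zero)
  apply mul_left_cancel₀ hne
  rw [← sum_prod_pow_eq_xi, sum_prod_pow_eq_det]

/-- As a polynomial identity over `ZMod p`: `xi` of the generic matrix equals the
`(p-1)`-st power of its determinant. -/
lemma xi_poly (p n : ℕ) [Fact p.Prime] :
    xi p n (Matrix.of fun i j => (MvPolynomial.X (i, j) : MvPolynomial (Fin n × Fin n) (ZMod p)))
      = (Matrix.of fun i j => (MvPolynomial.X (i, j) :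
          MvPolynomial (Fin n × Fin n) (ZMod p))).det ^ (p - 1) := by
  have hp := (Fact.out : p.Prime)
  rw [← sub_eq_zero]
  refine MvPolynomial.eq_zero_of_eval_eq_zero (K := ZMod p) (σ := Fin n × Fin n) _ ?_ ?_
  · intro v
    rw [map_sub]
    have h2 : (Matrix.of fun i j => (MvPolynomial.X (i, j) :
        MvPolynomial (Fin n × Fin n) (ZMod p))).map (MvPolynomial.eval v)
        = Matrix.of (fun i j => v (i, j)) := by
      ext i j; simp
    rw [map_xi (MvPolynomial.eval v) p n, h2, xi_zmod, map_pow,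
      RingHom.map_det, RingHom.mapMatrix_apply, h2, sub_self]
  · have hcard : Fintype.card (ZMod p) - 1 = p - 1 := by rw [ZMod.card]
    rw [hcard]
    have hmem : ∀ (P : MvPolynomial (Fin n × Fin n) (ZMod p)),
        (∀ q, MvPolynomial.degreeOf q P ≤ p - 1) →
        P ∈ MvPolynomial.restrictDegree (Fin n × Fin n) (ZMod p) (p - 1) := by
      intro P h
      rw [MvPolynomial.mem_restrictDegree]
      intro s hs i
      exact MvPolynomial.degreeOf_le_iff.mp (h i) s hs
    have hdet1 : ∀ q : Fin n × Fin n, MvPolynomial.degreeOf q (Matrix.det (Matrix.of fun i j =>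
        (MvPolynomial.X (i, j) : MvPolynomial (Fin n × Fin n) (ZMod p)))) ≤ 1 := by
      intro q
      rw [Matrix.det_apply']
      refine le_trans (MvPolynomial.degreeOf_sum_le _ _ _) ?_
      rw [Finset.sup_le_iff]
      intro σ _
      refine le_trans (MvPolynomial.degreeOf_mul_le _ _ _) ?_
      have h1 : MvPolynomial.degreeOf q
          (((Equiv.Perm.sign σ : ℤ) : MvPolynomial (Fin n × Fin n) (ZMod p))) = 0 := by
        rw [← map_intCast (MvPolynomial.C : ZMod p →+* MvPolynomial (Fin n × Fin n) (ZMod p))]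
        exact MvPolynomial.degreeOf_C _ _
      rw [h1, zero_add]
      refine le_trans (MvPolynomial.degreeOf_prod_le _ _ _) ?_
      have h2 : ∀ i : Fin n, MvPolynomial.degreeOf q
          ((Matrix.of fun i j => (MvPolynomial.X (i, j) : MvPolynomial (Fin n × Fin n) (ZMod p)))
            (σ i) i) ≤ if i = q.2 then 1 else 0 := by
        intro i
        rw [Matrix.of_apply, MvPolynomial.degreeOf_X]
        by_cases h : q = (σ i, i)
        · have h2 : i = q.2 := by rw [h]
          rw [if_pos h, if_pos h2]
        · rw [if_neg h]
          exact Nat.zero_le _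
      refine le_trans (Finset.sum_le_sum fun i _ => h2 i) ?_
      rw [Finset.sum_ite_eq' univ q.2 (fun _ => 1)]
      simp
    refine sub_mem (hmem _ ?_) (hmem _ ?_)
    · -- degree bound for xi
      intro q
      rw [xi]
      refine le_trans (MvPolynomial.degreeOf_sum_le _ _ _) ?_
      rw [Finset.sup_le_iff]
      intro a ha
      simp only [mem_filter] at ha
      refine le_trans (MvPolynomial.degreeOf_mul_le _ _ _) ?_
      have h1 : MvPolynomial.degreeOf q
          (((∏ k, Nat.multinomial Finset.univ (fun l => a l k) : ℕ) :
            MvPolynomial (Fin n × Fin n) (ZMod p))) = 0 := by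
        rw [← map_natCast (MvPolynomial.C : ZMod p →+* MvPolynomial (Fin n × Fin n) (ZMod p))]
        exact MvPolynomial.degreeOf_C _ _
      rw [h1, zero_add]
      refine le_trans (MvPolynomial.degreeOf_prod_le _ _ _) ?_
      have h2 : ∀ k, MvPolynomial.degreeOf q
          (∏ l, ((Matrix.of fun i j => (MvPolynomial.X (i, j) :
              MvPolynomial (Fin n × Fin n) (ZMod p))) l k) ^ (a l k))
          ≤ if k = q.2 then a q.1 q.2 else 0 := by
        intro k
        refine le_trans (MvPolynomial.degreeOf_prod_le _ _ _) ?_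
        have h3 : ∀ l, MvPolynomial.degreeOf q
            (((Matrix.of fun i j => (MvPolynomial.X (i, j) :
                MvPolynomial (Fin n × Fin n) (ZMod p))) l k) ^ (a l k))
            ≤ if (l, k) = q then a q.1 q.2 else 0 := by
          intro l
          refine le_trans (MvPolynomial.degreeOf_pow_le _ _ _) ?_
          rw [Matrix.of_apply, MvPolynomial.degreeOf_X]
          by_cases h : (l, k) = q
          · rw [if_pos h, if_pos (by rw [h]), mul_one]
            rw [show l = q.1 from by rw [← h], show k = q.2 from by rw [← h]]
          · rw [if_neg h, if_neg (fun hq : q = (l, k) => h hq.symm), mul_zero]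
        refine le_trans (Finset.sum_le_sum fun l _ => h3 l) ?_
        by_cases hk : k = q.2
        · rw [if_pos hk]
          have : ∀ l : Fin n, (if (l, k) = q then a q.1 q.2 else 0)
              = if l = q.1 then a q.1 q.2 else 0 := by
            intro l
            congr 1
            rw [Prod.ext_iff, hk]
            simp
          simp_rw [this]
          rw [Finset.sum_ite_eq' univ q.1 (fun _ => a q.1 q.2)]
          simp
        · rw [if_neg hk]
          have : ∀ l : Fin n, (if (l, k) = q then a q.1 q.2 else 0) = 0 := by
            intro l
            rw [if_neg]
            intro hq
            exact hk (congrArg Prod.snd hq)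
          simp [this]
      refine le_trans (Finset.sum_le_sum fun k _ => h2 k) ?_
      rw [Finset.sum_ite_eq' univ q.2 (fun _ => a q.1 q.2)]
      simp only [mem_univ, if_true]
      calc a q.1 q.2 ≤ ∑ l, a q.1 l :=
            Finset.single_le_sum (fun i _ => Nat.zero_le _) (mem_univ q.2)
        _ = p - 1 := ha.2.1 q.1
    · -- degree bound for det ^ (p - 1)
      intro q
      refine le_trans (MvPolynomial.degreeOf_pow_le _ _ _) ?_
      calc (p - 1) * MvPolynomial.degreeOf q _ ≤ (p - 1) * 1 :=
            Nat.mul_le_mul_left _ (hdet1 q)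
        _ = p - 1 := by omega

/-- Over any field of characteristic `p`, `xi` is the `(p-1)`-st power of the determinant. -/
lemma xi_eq_det_pow (p : ℕ) (hp : p.Prime) (K : Type*) [Field K] [CharP K p] (n : ℕ)
    (μ : Matrix (Fin n) (Fin n) K) : xi p n μ = μ.det ^ (p - 1) := by
  haveI : Fact p.Prime := ⟨hp⟩
  let f : MvPolynomial (Fin n × Fin n) (ZMod p) →+* K :=
    MvPolynomial.eval₂Hom (ZMod.castHom dvd_rfl K) (fun q => μ q.1 q.2)
  have h := congrArg f (xi_poly p n)
  rw [map_xi, map_pow, RingHom.map_det, RingHom.mapMatrix_apply] at h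
  have hX : (Matrix.of fun i j => (MvPolynomial.X (i, j) :
      MvPolynomial (Fin n × Fin n) (ZMod p))).map f = μ := by
    ext i j; simp [f]
  rwa [hX] at h

/-- `ξ`, viewed as a function on invertible matrices over a field of characteristic `p`,
is multiplicative. -/
theorem xi_mul (p : ℕ) (hp : p.Prime) (K : Type*) [Field K] [CharP K p] (n : ℕ)
    (μ ν : Matrix (Fin n) (Fin n) K) (hμ : IsUnit μ.det) (hν : IsUnit ν.det) :
    xi p n (μ * ν) = xi p n μ * xi p n ν := by
  rw [xi_eq_det_pow p hp K n, xi_eq_det_pow p hp K n, xi_eq_det_pow p hp K n,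
    Matrix.det_mul, mul_pow]
end

section
/- Let p be a prime, n : ℕ, and a : Fin n → Fin n → ℕ a function satisfying (∀ k, ∑_l a k l = p−1) and (∀ l, ∑_k a k l = p−1). Then in ZMod p: ((∏_k Nat.multinomial Finset.univ (fun l => a k l) : ℕ) : ZMod p) equals the sum, over all functions b : Equiv.Perm (Fin n) → ℕ satisfying ∑_σ b σ = p−1 and (∀ k l, ∑_{σ ∈ {σ ∣ σ k = l}} b σ = a k l), of ((Nat.multinomial Finset.univ b : ℕ) : ZMod p) * ∏_σ (((Equiv.Perm.sign σ : ℤ) : ZMod p))^(b σ). -/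
open Finset MvPolynomial

set_option maxHeartbeats 1000000



lemma aux_sum_pow (p : ℕ) [Fact p.Prime] : ∑ t : ZMod p, t ^ (p - 1) = -1 := by
  classical
  have hp := (Fact.out : p.Prime)
  have h1 : p - 1 ≠ 0 := by have := hp.one_lt; omega
  have hcard : Fintype.card (ZMod p) = p := ZMod.card p
  have hunits : (∑ x : (ZMod p)ˣ, (x : ZMod p) ^ (p-1)) = -1 := by
    rw [FiniteField.sum_pow_units (ZMod p) (p - 1), hcard, if_pos dvd_rfl]
  have hbij : ∑ x : (ZMod p)ˣ, (x : ZMod p) ^ (p-1)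
      = ∑ t ∈ (univ : Finset (ZMod p)) \ {0}, t ^ (p-1) := by
    refine Finset.sum_bij (fun x _ => (x : ZMod p)) ?_ ?_ ?_ ?_
    · intro x _; simp [Units.ne_zero]
    · intro x _ y _ h; exact Units.ext h
    · intro t ht
      simp only [mem_sdiff, mem_singleton] at ht
      exact ⟨Units.mk0 t ht.2, Finset.mem_univ _, rfl⟩
    · intro x _; rfl
  have : ∑ t : ZMod p, t ^ (p - 1)
      = (∑ t ∈ (univ : Finset (ZMod p)) \ {0}, t ^ (p-1)) + 0 ^ (p-1) := by
    rw [Finset.sum_eq_sum_sdiff_singleton_add (Finset.mem_univ (0 : ZMod p))]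
  rw [this, zero_pow h1, add_zero, ← hbij, hunits]


variable {p n : ℕ}

/-- pack a matrix of exponents into a Finsupp on the product type -/
noncomputable def packF (n : ℕ) (c : Fin n → Fin n → ℕ) : (Fin n × Fin n) →₀ ℕ :=
  Finsupp.equivFunOnFinite.symm (Function.uncurry c)

lemma packF_apply (c : Fin n → Fin n → ℕ) (k l : Fin n) : packF n c (k, l) = c k l := rfl

lemma packF_inj {c d : Fin n → Fin n → ℕ} (h : packF n c = packF n d) : c = d := by
  funext k l
  have := congrArg (fun f => f (k, l)) h
  simpa [packF_apply] using this

lemma aux_prod_X_pow (c : Fin n → Fin n → ℕ) :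
    (∏ k, ∏ l, (X (k,l) : MvPolynomial (Fin n × Fin n) (ZMod p)) ^ c k l)
      = monomial (packF n c) 1 := by
  rw [monomial_eq, C_1, one_mul]
  rw [Finsupp.prod_fintype _ _ (fun v => pow_zero _)]
  rw [Fintype.prod_prod_type]
  rfl

lemma aux_expand (m : ℕ) (r : Fin n → Fin n → ZMod p) :
    (∏ k, (∑ l, C (r k l) * X (k, l)) ^ m : MvPolynomial (Fin n × Fin n) (ZMod p))
      = ∑ c ∈ Fintype.piFinset (fun _ : Fin n => Finset.univ.piAntidiag m),
          monomial (packF n c)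
            ((∏ k, (Nat.multinomial Finset.univ (c k) : ZMod p)) * ∏ k, ∏ l, r k l ^ c k l) := by
  classical
  have step1 : ∀ k : Fin n, ((∑ l, C (r k l) * X (k, l)) ^ m : MvPolynomial (Fin n × Fin n) (ZMod p))
      = ∑ ck ∈ Finset.univ.piAntidiag m,
          C ((Nat.multinomial Finset.univ ck : ZMod p) * ∏ l, r k l ^ ck l) *
            ∏ l, (X (k,l) : MvPolynomial (Fin n × Fin n) (ZMod p)) ^ ck l := by
    intro k
    rw [Finset.sum_pow_eq_sum_piAntidiag]
    refine Finset.sum_congr rfl fun ck _ => ?_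
    simp_rw [mul_pow, Finset.prod_mul_distrib, ← C_pow, ← map_prod, map_mul, map_natCast]
    ring
  calc (∏ k, (∑ l, C (r k l) * X (k, l)) ^ m : MvPolynomial (Fin n × Fin n) (ZMod p))
      = ∑ c ∈ Fintype.piFinset (fun _ : Fin n => Finset.univ.piAntidiag m),
          ∏ k, (C ((Nat.multinomial Finset.univ (c k) : ZMod p) * ∏ l, r k l ^ c k l) *
            ∏ l, (X (k,l) : MvPolynomial (Fin n × Fin n) (ZMod p)) ^ c k l) := by
        simp_rw [step1]
        rw [Finset.prod_univ_sum]
    _ = _ := by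
        refine Finset.sum_congr rfl fun c _ => ?_
        rw [Finset.prod_mul_distrib, ← map_prod, aux_prod_X_pow, C_mul_monomial, mul_one,
          Finset.prod_mul_distrib]

lemma aux_coeff (m : ℕ) (r : Fin n → Fin n → ZMod p) (a : Fin n → Fin n → ℕ)
    (ha1 : ∀ k, ∑ l, a k l = m) :
    coeff (packF n a) (∏ k, (∑ l, C (r k l) * X (k, l)) ^ m : MvPolynomial (Fin n × Fin n) (ZMod p))
      = (∏ k, (Nat.multinomial Finset.univ (a k) : ZMod p)) * ∏ k, ∏ l, r k l ^ a k l := by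
  classical
  rw [aux_expand, MvPolynomial.coeff_sum]
  have hmem : a ∈ Fintype.piFinset (fun _ : Fin n => Finset.univ.piAntidiag m) := by
    simp only [Fintype.mem_piFinset, Finset.mem_piAntidiag]
    exact fun k => ⟨ha1 k, fun l _ => Finset.mem_univ l⟩
  rw [Finset.sum_eq_single_of_mem a hmem]
  · rw [coeff_monomial, if_pos rfl]
  · intro c _ hne
    rw [coeff_monomial, if_neg]
    intro h
    exact hne (packF_inj h)

lemma aux_det_expand (m : ℕ) :
    ((Matrix.of fun k l : Fin n => (X (k,l) : MvPolynomial (Fin n × Fin n) (ZMod p))).det) ^ m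
      = ∑ b ∈ Finset.univ.piAntidiag m,
          monomial (packF n (fun k l =>
              ∑ σ ∈ Finset.univ.filter (fun σ : Equiv.Perm (Fin n) => σ k = l), b σ))
            ((Nat.multinomial Finset.univ b : ZMod p) *
              ∏ σ : Equiv.Perm (Fin n), ((Equiv.Perm.sign σ : ℤ) : ZMod p) ^ b σ) := by
  classical
  have hdet : (Matrix.of fun k l : Fin n => (X (k,l) : MvPolynomial (Fin n × Fin n) (ZMod p))).det
      = ∑ σ : Equiv.Perm (Fin n),
          C ((Equiv.Perm.sign σ : ℤ) : ZMod p) * ∏ k, (X (k, σ k) : MvPolynomial (Fin n × Fin n) (ZMod p)) := by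
    rw [← Matrix.det_transpose, Matrix.det_apply']
    refine Finset.sum_congr rfl fun σ _ => ?_
    rw [map_intCast]
    rfl
  rw [hdet, Finset.sum_pow_eq_sum_piAntidiag]
  refine Finset.sum_congr rfl fun b _ => ?_
  have hX : ∏ σ : Equiv.Perm (Fin n),
      (∏ k, (X (k, σ k) : MvPolynomial (Fin n × Fin n) (ZMod p))) ^ b σ
      = monomial (packF n (fun k l =>
          ∑ σ ∈ Finset.univ.filter (fun σ : Equiv.Perm (Fin n) => σ k = l), b σ)) 1 := by
    rw [← aux_prod_X_pow]
    simp_rw [← Finset.prod_pow]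
    rw [Finset.prod_comm]
    refine Finset.prod_congr rfl fun k _ => ?_
    rw [← Finset.prod_fiberwise (Finset.univ : Finset (Equiv.Perm (Fin n))) (fun σ => σ k)
      (fun σ => (X (k, σ k) : MvPolynomial (Fin n × Fin n) (ZMod p)) ^ b σ)]
    refine Finset.prod_congr rfl fun l _ => ?_
    rw [Finset.prod_congr rfl (fun σ hσ => ?_), Finset.prod_pow_eq_pow_sum]
    rw [Finset.mem_filter] at hσ
    rw [hσ.2]
  simp_rw [mul_pow, Finset.prod_mul_distrib, ← C_pow, ← map_prod]
  rw [hX, C_mul_monomial, mul_one, ← map_natCast (C : ZMod p →+* MvPolynomial (Fin n × Fin n) (ZMod p)), C_mul_monomial]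

lemma aux_field (p : ℕ) [Fact p.Prime] {n : ℕ} (M : Matrix (Fin n) (Fin n) (ZMod p)) :
    ∑ τ : Fin n → ZMod p, ∏ k, (∑ l, τ l * M k l) ^ (p - 1)
      = (-1 : ZMod p) ^ n * M.det ^ (p - 1) := by
  classical
  have hp := (Fact.out : p.Prime)
  have h1 : p - 1 ≠ 0 := by have := hp.one_lt; omega
  have hMv : ∀ (τ : Fin n → ZMod p) (k : Fin n), (∑ l, τ l * M k l) = M.mulVec τ k := by
    intro τ k
    simp [Matrix.mulVec, dotProduct, mul_comm]
  simp_rw [hMv]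
  by_cases hdet : M.det = 0
  · -- singular case
    rw [hdet, zero_pow h1, mul_zero]
    obtain ⟨c, hc0, hcker⟩ := (Matrix.exists_mulVec_eq_zero_iff).2 hdet
    rw [← Finset.sum_fiberwise Finset.univ (fun τ => M.mulVec τ)
      (fun τ => ∏ k, (M.mulVec τ) k ^ (p - 1))]
    refine Finset.sum_eq_zero fun y _ => ?_
    have hconst : ∑ τ ∈ Finset.filter (fun τ => M.mulVec τ = y) Finset.univ,
        ∏ k, (M.mulVec τ) k ^ (p - 1)
        = (Finset.filter (fun τ => M.mulVec τ = y) Finset.univ).card •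
            ∏ k, y k ^ (p - 1) := by
      rw [Finset.sum_congr rfl (fun τ hτ => by rw [(Finset.mem_filter.1 hτ).2]),
        Finset.sum_const]
    rw [hconst, nsmul_eq_mul]
    -- show p divides the fiber cardinality
    suffices hdvd : ((Finset.filter (fun τ => M.mulVec τ = y) Finset.univ).card : ZMod p) = 0 by
      rw [hdvd, zero_mul]
    rcases Finset.eq_empty_or_nonempty (Finset.filter (fun τ => M.mulVec τ = y) Finset.univ) with he | ⟨τ0, hτ0⟩
    · rw [he]; simp
    · rw [Finset.mem_filter] at hτ0
      have hcardeq : (Finset.filter (fun τ => M.mulVec τ = y) Finset.univ).card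
          = (Finset.filter (fun τ => M.mulVec τ = 0) Finset.univ).card := by
        refine Finset.card_bij' (fun τ _ => τ - τ0) (fun τ _ => τ + τ0) ?_ ?_ ?_ ?_
        · intro τ hτ
          rw [Finset.mem_filter] at hτ ⊢
          rw [Matrix.mulVec_sub, hτ.2, hτ0.2, sub_self]
          exact ⟨Finset.mem_univ _, rfl⟩
        · intro τ hτ
          rw [Finset.mem_filter] at hτ ⊢
          rw [Matrix.mulVec_add, hτ.2, hτ0.2, zero_add]
          exact ⟨Finset.mem_univ _, rfl⟩
        · intro τ _; simp
        · intro τ _; simp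
      rw [hcardeq]
      -- the kernel has cardinality divisible by p
      set S : Submodule (ZMod p) (Fin n → ZMod p) := LinearMap.ker M.mulVecLin with hS
      have hcard2 : (Finset.filter (fun τ => M.mulVec τ = 0) Finset.univ).card
          = Fintype.card S := by
        rw [← Fintype.card_subtype]
        refine Fintype.card_congr (Equiv.subtypeEquivRight fun τ => ?_)
        simp [hS, LinearMap.mem_ker, Matrix.mulVecLin_apply]
      rw [hcard2]
      have hdmem : c ∈ S := by
        simp [hS, LinearMap.mem_ker, Matrix.mulVecLin_apply, hcker]
      have hd : ((⟨c, hdmem⟩ : S)) ≠ 0 := by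
        intro h
        apply hc0
        simpa [Subtype.ext_iff] using h
      have hsmul : p • (⟨c, hdmem⟩ : S) = 0 := by
        have : ((p : ZMod p)) • (⟨c, hdmem⟩ : S) = 0 := by
          rw [ZMod.natCast_self, zero_smul]
        rwa [Nat.cast_smul_eq_nsmul] at this
      have horder : addOrderOf (⟨c, hdmem⟩ : S) = p := addOrderOf_eq_prime hsmul hd
      have hdvd2 := addOrderOf_dvd_card (x := (⟨c, hdmem⟩ : S))
      rw [horder] at hdvd2
      obtain ⟨q, hq⟩ := hdvd2
      rw [hq]
      simp
  · -- invertible case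
    have hu : IsUnit M.det := Ne.isUnit hdet
    haveI := M.invertibleOfIsUnitDet hu
    have hbij : Function.Bijective M.mulVec := by
      constructor
      · intro x y hxy
        have h2 := congrArg M⁻¹.mulVec hxy
        rwa [Matrix.mulVec_mulVec, Matrix.mulVec_mulVec, Matrix.nonsing_inv_mul M hu,
          Matrix.one_mulVec, Matrix.one_mulVec] at h2
      · intro y
        exact ⟨M⁻¹.mulVec y, by
          rw [Matrix.mulVec_mulVec, Matrix.mul_nonsing_inv M hu, Matrix.one_mulVec]⟩
    have hcomp := Fintype.sum_bijective M.mulVec hbij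
      (fun τ => ∏ k, (M.mulVec τ) k ^ (p - 1)) (fun y => ∏ k, (y k) ^ (p - 1))
      (fun τ => rfl)
    rw [hcomp]
    show ∑ y : Fin n → ZMod p, ∏ k, (y k) ^ (p - 1) = _
    rw [← Fintype.piFinset_univ,
      Finset.sum_prod_piFinset (Finset.univ : Finset (ZMod p)) (fun _ t => t ^ (p - 1))]
    rw [ZMod.pow_card_sub_one_eq_one hdet, mul_one]
    rw [Finset.prod_congr rfl (fun k _ => aux_sum_pow p)]
    simp

lemma aux_monomial_mem {p n m : ℕ} (d : (Fin n × Fin n) →₀ ℕ) (w : ZMod p) (h : ∀ v, d v ≤ m) :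
    (monomial d w : MvPolynomial (Fin n × Fin n) (ZMod p))
      ∈ MvPolynomial.restrictDegree (Fin n × Fin n) (ZMod p) m := by
  rw [MvPolynomial.mem_restrictDegree]
  intro s hs i
  have hsd := MvPolynomial.support_monomial_subset hs
  rw [Finset.mem_singleton] at hsd
  subst hsd
  exact h i

lemma aux_key (p : ℕ) [Fact p.Prime] (n : ℕ) :
    (∑ τ : Fin n → ZMod p, ∏ k, (∑ l, C (τ l) * X (k, l)) ^ (p - 1)
        : MvPolynomial (Fin n × Fin n) (ZMod p))
      = C ((-1 : ZMod p) ^ n) *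
          ((Matrix.of fun k l : Fin n => (X (k,l) : MvPolynomial (Fin n × Fin n) (ZMod p))).det) ^ (p - 1) := by
  classical
  have hp := (Fact.out : p.Prime)
  rw [← sub_eq_zero]
  have hcard : Fintype.card (ZMod p) = p := ZMod.card p
  apply MvPolynomial.eq_zero_of_eval_eq_zero
  · -- evaluation
    intro v
    rw [map_sub, sub_eq_zero]
    have hL : MvPolynomial.eval v (∑ τ : Fin n → ZMod p, ∏ k, (∑ l, C (τ l) * X (k, l)) ^ (p - 1)
        : MvPolynomial (Fin n × Fin n) (ZMod p))
        = ∑ τ : Fin n → ZMod p, ∏ k, (∑ l, τ l * v (k, l)) ^ (p - 1) := by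
      simp
    have hR : MvPolynomial.eval v (C ((-1 : ZMod p) ^ n) *
          ((Matrix.of fun k l : Fin n => (X (k,l) : MvPolynomial (Fin n × Fin n) (ZMod p))).det) ^ (p - 1))
        = (-1 : ZMod p) ^ n * (Matrix.of fun k l : Fin n => v (k, l)).det ^ (p - 1) := by
      rw [map_mul, eval_C, map_pow]
      congr 2
      rw [RingHom.map_det]
      congr 1
      ext k l
      simp [Matrix.map]
    rw [hL, hR]
    exact aux_field p (Matrix.of fun k l : Fin n => v (k, l))
  · -- degrees
    rw [hcard]
    apply Submodule.sub_mem
    · apply Submodule.sum_mem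
      intro τ _
      rw [aux_expand]
      apply Submodule.sum_mem
      intro c hc
      apply aux_monomial_mem
      intro v
      obtain ⟨k, l⟩ := v
      rw [packF_apply]
      rw [Fintype.mem_piFinset] at hc
      have := (Finset.mem_piAntidiag.1 (hc k)).1
      calc c k l ≤ ∑ l', c k l' := Finset.single_le_sum (fun _ _ => Nat.zero_le _) (Finset.mem_univ l)
        _ = p - 1 := this
    · rw [aux_det_expand, Finset.mul_sum]
      apply Submodule.sum_mem
      intro b hb
      rw [C_mul_monomial]
      apply aux_monomial_mem
      intro v
      obtain ⟨k, l⟩ := v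
      rw [packF_apply]
      have hsum := (Finset.mem_piAntidiag.1 hb).1
      calc ∑ σ ∈ Finset.univ.filter (fun σ : Equiv.Perm (Fin n) => σ k = l), b σ
          ≤ ∑ σ, b σ := Finset.sum_le_sum_of_subset (Finset.filter_subset _ _)
        _ = p - 1 := hsum

/-- The combinatorial identity mod `p` extracted from the relative Cartier isomorphism:
for `a : Fin n → Fin n → ℕ` whose every row sum and every column sum equals `p - 1`,
`∏ k, multinomial (a k)` is congruent mod `p` to the signed sum over all
`b : Equiv.Perm (Fin n) → ℕ` with `∑ σ, b σ = p - 1` and `∑_{σ, σ k = l} b σ = a k l`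
(all such `b` have values `< p`, so the index set below captures exactly these) of
`multinomial b * ∏ σ, (sign σ) ^ (b σ)`. -/
theorem prod_multinomial_eq_signed_sum (p : ℕ) (hp : p.Prime) (n : ℕ)
    (a : Fin n → Fin n → ℕ)
    (ha1 : ∀ k, ∑ l, a k l = p - 1) (ha2 : ∀ l, ∑ k, a k l = p - 1) :
    ((∏ k, Nat.multinomial Finset.univ (fun l => a k l) : ℕ) : ZMod p) =
      ∑ b ∈ Finset.filter
          (fun b : Equiv.Perm (Fin n) → ℕ =>
            (∑ σ, b σ = p - 1) ∧
              ∀ k l, ∑ σ ∈ Finset.filter (fun σ : Equiv.Perm (Fin n) => σ k = l)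
                  Finset.univ, b σ = a k l)
          (Fintype.piFinset fun _ => Finset.range p),
        ((Nat.multinomial Finset.univ b : ℕ) : ZMod p) *
          ∏ σ : Equiv.Perm (Fin n), (((Equiv.Perm.sign σ : ℤ) : ZMod p)) ^ (b σ) := by
  classical
  haveI : Fact p.Prime := ⟨hp⟩
  have h1 : 1 ≤ p := hp.one_lt.le
  -- coefficient of the τ-sum, way 1
  have way1 : MvPolynomial.coeff (packF n a)
      (∑ τ : Fin n → ZMod p, ∏ k, (∑ l, C (τ l) * X (k, l)) ^ (p - 1)
        : MvPolynomial (Fin n × Fin n) (ZMod p))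
      = (∏ k, (Nat.multinomial Finset.univ (a k) : ZMod p)) * (-1 : ZMod p) ^ n := by
    rw [MvPolynomial.coeff_sum]
    have hterm : ∀ τ : Fin n → ZMod p, MvPolynomial.coeff (packF n a)
        (∏ k, (∑ l, C (τ l) * X (k, l)) ^ (p - 1) : MvPolynomial (Fin n × Fin n) (ZMod p))
        = (∏ k, (Nat.multinomial Finset.univ (a k) : ZMod p)) * ∏ l, (τ l) ^ (p - 1) := by
      intro τ
      rw [aux_coeff (p - 1) (fun k l => τ l) a ha1]
      congr 1
      rw [Finset.prod_comm]
      refine Finset.prod_congr rfl fun l _ => ?_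
      rw [Finset.prod_pow_eq_pow_sum, ha2 l]
    simp_rw [hterm]
    rw [← Finset.mul_sum]
    congr 1
    rw [← Fintype.piFinset_univ,
      Finset.sum_prod_piFinset (Finset.univ : Finset (ZMod p)) (fun _ t => t ^ (p - 1))]
    rw [Finset.prod_congr rfl (fun l _ => aux_sum_pow p)]
    simp
  -- way 2
  have way2 : MvPolynomial.coeff (packF n a)
      (∑ τ : Fin n → ZMod p, ∏ k, (∑ l, C (τ l) * X (k, l)) ^ (p - 1)
        : MvPolynomial (Fin n × Fin n) (ZMod p))
      = (-1 : ZMod p) ^ n *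
          ∑ b ∈ Finset.filter
            (fun b : Equiv.Perm (Fin n) → ℕ =>
              ∀ k l, ∑ σ ∈ Finset.filter (fun σ : Equiv.Perm (Fin n) => σ k = l)
                  Finset.univ, b σ = a k l)
            (Finset.univ.piAntidiag (p - 1)),
          ((Nat.multinomial Finset.univ b : ZMod p) *
            ∏ σ : Equiv.Perm (Fin n), (((Equiv.Perm.sign σ : ℤ) : ZMod p)) ^ (b σ)) := by
    rw [aux_key p n, MvPolynomial.coeff_C_mul, aux_det_expand, MvPolynomial.coeff_sum]
    congr 1
    rw [Finset.sum_filter]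
    refine Finset.sum_congr rfl fun b _ => ?_
    rw [MvPolynomial.coeff_monomial]
    congr 1
    apply propext
    constructor
    · intro h k l
      exact congrFun (congrFun (packF_inj h) k) l
    · intro h
      apply congrArg
      funext k l
      exact h k l
  -- identify the two filter sets
  have hsets : Finset.filter
          (fun b : Equiv.Perm (Fin n) → ℕ =>
            (∑ σ, b σ = p - 1) ∧
              ∀ k l, ∑ σ ∈ Finset.filter (fun σ : Equiv.Perm (Fin n) => σ k = l)
                  Finset.univ, b σ = a k l)
          (Fintype.piFinset fun _ => Finset.range p)
      = Finset.filter
            (fun b : Equiv.Perm (Fin n) → ℕ =>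
              ∀ k l, ∑ σ ∈ Finset.filter (fun σ : Equiv.Perm (Fin n) => σ k = l)
                  Finset.univ, b σ = a k l)
            (Finset.univ.piAntidiag (p - 1)) := by
    ext b
    simp only [Finset.mem_filter, Fintype.mem_piFinset, Finset.mem_piAntidiag,
      Finset.mem_range]
    constructor
    · rintro ⟨_, hsum, hcond⟩
      exact ⟨⟨hsum, fun σ _ => Finset.mem_univ σ⟩, hcond⟩
    · rintro ⟨⟨hsum, _⟩, hcond⟩
      refine ⟨fun σ => ?_, hsum, hcond⟩
      have : b σ ≤ p - 1 := hsum ▸ Finset.single_le_sum (fun _ _ => Nat.zero_le _) (Finset.mem_univ σ)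
      omega
  have key := way1.symm.trans way2
  rw [hsets]
  push_cast
  have hne : ((-1 : ZMod p) ^ n) ≠ 0 := by
    apply pow_ne_zero
    simp [neg_eq_zero]
  apply mul_right_cancel₀ hne
  rw [key, mul_comm]
end
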